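/- The set of nilpotent matrices belonging to h equals the ℂ-linear span of {X1 − X2, X3}; this span has dimension 2, is an ideal of the Lie algebra h (⁅Y, Z⁆ ∈ span{X1 − X2, X3} for all Y ∈ h and Z ∈ span{X1 − X2, X3}), and is abelian (⁅Z, Z'⁆ = 0 for all Z, Z' in it). -/

import Mathlib

open Matrix

noncomputable section

def X1 (α β : ℂ) : Matrix (Fin 4) (Fin 4) ℂ :=
  !![1,1,0,1; 1,1,0,0; α,β,0,0; 0,0,0,0]

def X2 (α β : ℂ) : Matrix (Fin 4) (Fin 4) ℂ :=
  !![1,1,0,0; 1,1,0,1; β-1,α+1,0,0; 0,0,0,0]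

def X3 : Matrix (Fin 4) (Fin 4) ℂ :=
  !![0,0,0,0; 0,0,0,0; 0,0,0,1; 0,0,0,0]

/-- The ℂ-linear span of {X1, X2, X3}. -/
def h (α β : ℂ) : Submodule ℂ (Matrix (Fin 4) (Fin 4) ℂ) :=
  Submodule.span ℂ {X1 α β, X2 α β, X3}

lemma N_mul_X3 (α β : ℂ) : (X1 α β - X2 α β) * X3 = 0 := by
  ext i j
  fin_cases i <;> fin_cases j <;>
    simp [X1, X2, X3, vecHead, vecTail, Matrix.mul_apply, Fin.sum_univ_four] <;> ring

lemma X3_mul_N (α β : ℂ) : X3 * (X1 α β - X2 α β) = 0 := by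
  ext i j
  fin_cases i <;> fin_cases j <;>
    simp [X1, X2, X3, vecHead, vecTail, Matrix.mul_apply, Fin.sum_univ_four] <;> ring

lemma X3_mul_X3 : X3 * X3 = 0 := by
  ext i j
  fin_cases i <;> fin_cases j <;>
    simp [X3, vecHead, vecTail, Matrix.mul_apply, Fin.sum_univ_four]

lemma N_mul_N (α β : ℂ) :
    (X1 α β - X2 α β) * (X1 α β - X2 α β) = (2 * (α - β + 1)) • X3 := by
  ext i j
  fin_cases i <;> fin_cases j <;>
    simp [X1, X2, X3, vecHead, vecTail, Matrix.mul_apply, Fin.sum_univ_four] <;> ring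

set_option maxHeartbeats 800000 in
lemma lie_X1_N (α β : ℂ) :
    ⁅X1 α β, X1 α β - X2 α β⁆ = -X3 := by
  rw [Ring.lie_def]
  ext i j
  simp only [Matrix.sub_apply, Matrix.neg_apply, Matrix.zero_apply]
  fin_cases i <;> fin_cases j <;>
    simp [X1, X2, X3, vecHead, vecTail, Matrix.mul_apply, Fin.sum_univ_four] <;> ring

set_option maxHeartbeats 800000 in
lemma lie_X2_N (α β : ℂ) :
    ⁅X2 α β, X1 α β - X2 α β⁆ = -X3 := by
  rw [Ring.lie_def]
  ext i j
  simp only [Matrix.sub_apply, Matrix.neg_apply, Matrix.zero_apply]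
  fin_cases i <;> fin_cases j <;>
    simp [X1, X2, X3, vecHead, vecTail, Matrix.mul_apply, Fin.sum_univ_four] <;> ring

lemma lie_X1_X3 (α β : ℂ) : ⁅X1 α β, X3⁆ = 0 := by
  rw [Ring.lie_def]
  ext i j
  simp only [Matrix.sub_apply, Matrix.neg_apply, Matrix.zero_apply]
  fin_cases i <;> fin_cases j <;>
    simp [X1, X3, vecHead, vecTail, Matrix.mul_apply, Fin.sum_univ_four]

lemma lie_X2_X3 (α β : ℂ) : ⁅X2 α β, X3⁆ = 0 := by
  rw [Ring.lie_def]
  ext i j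
  simp only [Matrix.sub_apply, Matrix.neg_apply, Matrix.zero_apply]
  fin_cases i <;> fin_cases j <;>
    simp [X2, X3, vecHead, vecTail, Matrix.mul_apply, Fin.sum_univ_four] <;> ring

lemma trace_X1 (α β : ℂ) : Matrix.trace (X1 α β) = 2 := by
  simp [X1, vecHead, vecTail, Matrix.trace, Matrix.diag, Fin.sum_univ_four]; ring

lemma trace_X2 (α β : ℂ) : Matrix.trace (X2 α β) = 2 := by
  simp [X2, vecHead, vecTail, Matrix.trace, Matrix.diag, Fin.sum_univ_four]; ring

lemma trace_X3 : Matrix.trace X3 = 0 := by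
  simp [X3, vecHead, vecTail, Matrix.trace, Matrix.diag, Fin.sum_univ_four]

lemma key_mul (α β : ℂ) (a c a' c' : ℂ) :
    (a • (X1 α β - X2 α β) + c • X3) * (a' • (X1 α β - X2 α β) + c' • X3)
      = (2 * (α - β + 1) * (a * a')) • X3 := by
  simp only [add_mul, mul_add, Matrix.smul_mul, Matrix.mul_smul,
    N_mul_X3, X3_mul_N, X3_mul_X3, N_mul_N, smul_zero, add_zero, zero_add,
    smul_smul]
  ring_nf

lemma lie_X3_N (α β : ℂ) : ⁅X3, X1 α β - X2 α β⁆ = 0 := by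
  rw [Ring.lie_def, X3_mul_N, N_mul_X3, sub_zero]

lemma isNilpotent_aux (α β a c : ℂ) :
    IsNilpotent (a • (X1 α β - X2 α β) + c • X3) := by
  refine ⟨3, ?_⟩
  have hsq := key_mul α β a c a c
  have hX3Z : X3 * (a • (X1 α β - X2 α β) + c • X3) = 0 := by
    rw [mul_add, Matrix.mul_smul, Matrix.mul_smul, X3_mul_N, X3_mul_X3,
      smul_zero, smul_zero, add_zero]
  calc (a • (X1 α β - X2 α β) + c • X3) ^ 3
      = ((a • (X1 α β - X2 α β) + c • X3) * (a • (X1 α β - X2 α β) + c • X3))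
        * (a • (X1 α β - X2 α β) + c • X3) := by rw [pow_succ, pow_two]
    _ = 0 := by rw [hsq, Matrix.smul_mul, hX3Z, smul_zero]

lemma mlie_add (x y z : Matrix (Fin 4) (Fin 4) ℂ) : ⁅x, y + z⁆ = ⁅x, y⁆ + ⁅x, z⁆ := by
  simp only [Ring.lie_def, mul_add, add_mul]; abel

lemma madd_lie (x y z : Matrix (Fin 4) (Fin 4) ℂ) : ⁅x + y, z⁆ = ⁅x, z⁆ + ⁅y, z⁆ := by
  simp only [Ring.lie_def, mul_add, add_mul]; abel

lemma mlie_smul (r : ℂ) (x y : Matrix (Fin 4) (Fin 4) ℂ) : ⁅x, r • y⁆ = r • ⁅x, y⁆ := by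
  simp only [Ring.lie_def, Matrix.mul_smul, Matrix.smul_mul, smul_sub]

lemma msmul_lie (r : ℂ) (x y : Matrix (Fin 4) (Fin 4) ℂ) : ⁅r • x, y⁆ = r • ⁅x, y⁆ := by
  simp only [Ring.lie_def, Matrix.mul_smul, Matrix.smul_mul, smul_sub]

lemma mlie_self (x : Matrix (Fin 4) (Fin 4) ℂ) : ⁅x, x⁆ = 0 := by
  rw [Ring.lie_def, sub_self]

lemma mzero_lie (x : Matrix (Fin 4) (Fin 4) ℂ) : ⁅(0 : Matrix (Fin 4) (Fin 4) ℂ), x⁆ = 0 := by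
  rw [Ring.lie_def, zero_mul, mul_zero, sub_self]

/-- The set of nilpotent matrices in h is the span of {X1 − X2, X3}, a
2-dimensional abelian ideal of h. -/
theorem nilpotent_set_of_h (α β : ℂ) (hαβ : α + β ≠ 0) :
    {X : Matrix (Fin 4) (Fin 4) ℂ | X ∈ h α β ∧ IsNilpotent X}
      = ↑(Submodule.span ℂ {X1 α β - X2 α β, X3}) ∧
    Module.finrank ℂ (Submodule.span ℂ ({X1 α β - X2 α β, X3} :
      Set (Matrix (Fin 4) (Fin 4) ℂ))) = 2 ∧
    (∀ Y ∈ h α β, ∀ Z ∈ Submodule.span ℂ ({X1 α β - X2 α β, X3} :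
      Set (Matrix (Fin 4) (Fin 4) ℂ)),
      ⁅Y, Z⁆ ∈ Submodule.span ℂ ({X1 α β - X2 α β, X3} : Set (Matrix (Fin 4) (Fin 4) ℂ))) ∧
    (∀ Z ∈ Submodule.span ℂ ({X1 α β - X2 α β, X3} : Set (Matrix (Fin 4) (Fin 4) ℂ)),
      ∀ Z' ∈ Submodule.span ℂ ({X1 α β - X2 α β, X3} : Set (Matrix (Fin 4) (Fin 4) ℂ)),
      ⁅Z, Z'⁆ = 0) := by
  have hNmem : X1 α β - X2 α β ∈ h α β :=
    sub_mem (Submodule.subset_span (by simp)) (Submodule.subset_span (by simp))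
  have hX3mem : X3 ∈ h α β := Submodule.subset_span (by simp)
  refine ⟨?_, ?_, ?_, ?_⟩
  · ext X
    simp only [Set.mem_setOf_eq, SetLike.mem_coe]
    constructor
    · rintro ⟨hX, hn⟩
      rw [h, Submodule.mem_span_insert] at hX
      obtain ⟨a, y, hy, rfl⟩ := hX
      rw [Submodule.mem_span_insert] at hy
      obtain ⟨b, z, hz, rfl⟩ := hy
      rw [Submodule.mem_span_singleton] at hz
      obtain ⟨c, rfl⟩ := hz
      have ht := (Matrix.isNilpotent_trace_of_isNilpotent hn).eq_zero
      rw [Matrix.trace_add, Matrix.trace_add, Matrix.trace_smul, Matrix.trace_smul,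
        Matrix.trace_smul, trace_X1, trace_X2, trace_X3, smul_zero, add_zero,
        smul_eq_mul, smul_eq_mul] at ht
      have hb : b = -a := by linear_combination ht / 2
      rw [Submodule.mem_span_pair]
      refine ⟨a, c, ?_⟩
      rw [hb]
      module
    · intro hX
      rw [Submodule.mem_span_pair] at hX
      obtain ⟨a, c, rfl⟩ := hX
      exact ⟨add_mem (Submodule.smul_mem _ _ hNmem) (Submodule.smul_mem _ _ hX3mem),
        isNilpotent_aux α β a c⟩
  · have hli : LinearIndependent ℂ ![X1 α β - X2 α β, X3] := by
      rw [LinearIndependent.pair_iff]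
      intro s t hst
      constructor
      · have h1 := congrFun (congrFun hst 0) 3
        simpa [X1, X2, X3, vecHead, vecTail] using h1
      · have h2 := congrFun (congrFun hst 2) 3
        simpa [X1, X2, X3, vecHead, vecTail] using h2
    have hrange : ({X1 α β - X2 α β, X3} : Set (Matrix (Fin 4) (Fin 4) ℂ))
        = Set.range ![X1 α β - X2 α β, X3] := by
      ext z
      simp [Fin.exists_fin_two, eq_comm, or_comm]
    rw [hrange, finrank_span_eq_card hli]
    simp
  · intro Y hY Z hZ
    rw [Submodule.mem_span_pair] at hZ
    obtain ⟨a, c, rfl⟩ := hZ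
    induction hY using Submodule.span_induction with
    | mem x hx =>
      have hXmem : X3 ∈ Submodule.span ℂ
          ({X1 α β - X2 α β, X3} : Set (Matrix (Fin 4) (Fin 4) ℂ)) :=
        Submodule.subset_span (by simp)
      simp only [Set.mem_insert_iff, Set.mem_singleton_iff] at hx
      rcases hx with rfl | rfl | rfl
      · rw [mlie_add, mlie_smul, mlie_smul, lie_X1_N, lie_X1_X3, smul_zero, add_zero]
        exact Submodule.smul_mem _ _ (neg_mem hXmem)
      · rw [mlie_add, mlie_smul, mlie_smul, lie_X2_N, lie_X2_X3, smul_zero, add_zero]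
        exact Submodule.smul_mem _ _ (neg_mem hXmem)
      · rw [mlie_add, mlie_smul, mlie_smul, lie_X3_N, mlie_self, smul_zero, smul_zero,
          add_zero]
        exact zero_mem _
    | zero => rw [mzero_lie]; exact zero_mem _
    | add x y hx hy ihx ihy => rw [madd_lie]; exact add_mem ihx ihy
    | smul r x hx ih => rw [msmul_lie]; exact Submodule.smul_mem _ _ ih
  · intro Z hZ Z' hZ'
    rw [Submodule.mem_span_pair] at hZ hZ'
    obtain ⟨a, c, rfl⟩ := hZ
    obtain ⟨a', c', rfl⟩ := hZ'
    rw [Ring.lie_def, key_mul, key_mul, mul_comm a' a, sub_self]
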